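/- arXiv:1009.4943 — 8 statements merged into one kernel-verified Lean document; each statement's English description precedes it below -/
import Mathlib

section
/- In a finite R-trivial monoid, (x^ω y^ω)^ω = (x^ω y^ω)^ω · (xy) for all x, y. -/
/-- In a finite R-trivial monoid, `(x^ω y^ω)^ω = (x^ω y^ω)^ω * (xy)`. -/
theorem pow_idem_prod_mul (M : Type*) [Monoid M] [Finite M]
    (hR : ∀ a b : M, {z : M | ∃ s : M, a * s = z} = {z : M | ∃ s : M, b * s = z} → a = b)
    (x y : M) (a b c : ℕ) (ha : 0 < a) (hb : 0 < b) (hc : 0 < c)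
    (hxa : x ^ a * x ^ a = x ^ a)
    (hyb : y ^ b * y ^ b = y ^ b)
    (habc : (x ^ a * y ^ b) ^ c * (x ^ a * y ^ b) ^ c = (x ^ a * y ^ b) ^ c) :
    (x ^ a * y ^ b) ^ c = (x ^ a * y ^ b) ^ c * (x * y) := by
  have hp : ∀ (u : M) (n : ℕ), 0 < n → u * u ^ (n - 1) = u ^ n := fun u n hn => by
    rw [← pow_succ', Nat.sub_add_cancel hn]
  have hsplitx : x * (x ^ (a - 1) * (y ^ b * (x ^ a * y ^ b) ^ (c - 1)))
      = (x ^ a * y ^ b) ^ c := by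
    rw [← mul_assoc, hp x a ha, ← mul_assoc, hp _ c hc]
  have hsplity : y ^ b * (x ^ a * y ^ b) ^ (c - 1)
      = y * (y ^ (b - 1) * (x ^ a * y ^ b) ^ (c - 1)) := by
    rw [← mul_assoc, hp y b hb]
  have hsplitc : (x ^ a * y ^ b) ^ c = x ^ a * (y ^ b * (x ^ a * y ^ b) ^ (c - 1)) := by
    rw [← mul_assoc, hp _ c hc]
  set e := (x ^ a * y ^ b) ^ c with he
  have hee : e * e = e := habc
  -- key R-triviality consequence: if e * (u * s) = e then e = e * u
  have key : ∀ u s : M, e * (u * s) = e → e = e * u := by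
    intro u s h
    apply hR
    ext z
    constructor
    · rintro ⟨t, rfl⟩
      exact ⟨s * t, by rw [mul_assoc, ← mul_assoc u, ← mul_assoc, h]⟩
    · rintro ⟨t, rfl⟩
      exact ⟨u * t, by rw [← mul_assoc]⟩
  have hex : e = e * x := by
    apply key x (x ^ (a - 1) * (y ^ b * (x ^ a * y ^ b) ^ (c - 1)))
    rw [hsplitx, hee]
  have hexn : ∀ n : ℕ, e * x ^ n = e := by
    intro n
    induction n with
    | zero => simp
    | succ n ih => rw [pow_succ, ← mul_assoc, ih, ← hex]
  have heyrest : e * (y ^ b * (x ^ a * y ^ b) ^ (c - 1)) = e := by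
    have h1 : e * (x ^ a * (y ^ b * (x ^ a * y ^ b) ^ (c - 1))) = e := by
      rw [← hsplitc]; exact hee
    rw [← mul_assoc, hexn a] at h1
    exact h1
  have hey : e = e * y := by
    apply key y (y ^ (b - 1) * (x ^ a * y ^ b) ^ (c - 1))
    rw [← hsplity]
    exact heyrest
  rw [← mul_assoc, ← hex, ← hey]
end

section
/- In a finite R-trivial monoid, (x^ω y^ω)^ω = (x^ω y^ω)^ω · (xy)^ω for all x, y. -/
/-- In a finite R-trivial monoid, `(x^ω y^ω)^ω = (x^ω y^ω)^ω * (xy)^ω`. -/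
theorem pow_idem_prod_mul_pow (M : Type*) [Monoid M] [Finite M]
    (hR : ∀ a b : M, {z : M | ∃ s : M, a * s = z} = {z : M | ∃ s : M, b * s = z} → a = b)
    (x y : M) (a b c d : ℕ) (ha : 0 < a) (hb : 0 < b) (hc : 0 < c) (hd : 0 < d)
    (hxa : x ^ a * x ^ a = x ^ a)
    (hyb : y ^ b * y ^ b = y ^ b)
    (habc : (x ^ a * y ^ b) ^ c * (x ^ a * y ^ b) ^ c = (x ^ a * y ^ b) ^ c)
    (hxyd : (x * y) ^ d * (x * y) ^ d = (x * y) ^ d) :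
    (x ^ a * y ^ b) ^ c = (x ^ a * y ^ b) ^ c * (x * y) ^ d := by
  -- R-triviality in the convenient form
  have helper : ∀ p q : M, (∃ u : M, q * u = p) → (∃ v : M, p * v = q) → p = q := by
    rintro p q ⟨u, hu⟩ ⟨v, hv⟩
    apply hR
    ext z
    simp only [Set.mem_setOf_eq]
    constructor
    · rintro ⟨s, rfl⟩; exact ⟨u * s, by rw [← mul_assoc, hu]⟩
    · rintro ⟨s, rfl⟩; exact ⟨v * s, by rw [← mul_assoc, hv]⟩
  -- an idempotent power absorbs the base element
  have stab : ∀ (z : M) (n : ℕ), 0 < n → z ^ n * z ^ n = z ^ n → z ^ n * z = z ^ n := by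
    intro z n hn hz
    apply helper
    · exact ⟨z, rfl⟩
    · refine ⟨z ^ (n - 1), ?_⟩
      have h1 : z ^ n * z = z ^ (n + 1) := (pow_succ z n).symm
      rw [h1, ← pow_add]
      have h2 : n + 1 + (n - 1) = n + n := by omega
      rw [h2, pow_add, hz]
  set e := x ^ a with he
  set f := y ^ b with hf
  set g := (e * f) ^ c with hg
  have ex : e * x = e := stab x a ha hxa
  have fy : f * y = f := stab y b hb hyb
  have gc : g * (e * f) ^ c = g := habc
  have key1 : g * (e * (f * (e * f) ^ (c - 1))) = g := by
    have h : e * (f * (e * f) ^ (c - 1)) = (e * f) ^ c := by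
      rw [← mul_assoc, ← pow_succ']
      congr 1; omega
    rw [h]; exact gc
  -- g * e = g
  have ge : g * e = g := by
    apply helper
    · exact ⟨e, rfl⟩
    · exact ⟨f * (e * f) ^ (c - 1), by rw [mul_assoc]; exact key1⟩
  -- g * f = g
  have gf : g * f = g := by
    apply helper
    · exact ⟨f, rfl⟩
    · refine ⟨(e * f) ^ (c - 1), ?_⟩
      calc g * f * (e * f) ^ (c - 1)
          = g * (e * (f * (e * f) ^ (c - 1))) := by
            conv_rhs => rw [← mul_assoc, ge, ← mul_assoc]
        _ = g := key1
  have gx : g * x = g := by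
    conv_lhs => rw [← ge]
    rw [mul_assoc, ex, ge]
  have gy : g * y = g := by
    conv_lhs => rw [← gf]
    rw [mul_assoc, fy, gf]
  have gxy : g * (x * y) = g := by rw [← mul_assoc, gx, gy]
  have key : ∀ k : ℕ, g * (x * y) ^ k = g := by
    intro k
    induction k with
    | zero => simp
    | succ m ih => rw [pow_succ, ← mul_assoc, ih, gxy]
  exact (key d).symm
end

section
/- Let S be a finite R-trivial monoid and let e, f ∈ S be idempotents. Then the left ideal S(ef)^ω is the least upper bound of Se and Sf in the poset of left ideals generated by idempotents, ordered by reverse inclusion. That is: S(ef)^ω ⊆ Se, S(ef)^ω ⊆ Sf, and for any idempotent g with Sg ⊆ Se and Sg ⊆ Sf, one has Sg ⊆ S(ef)^ω. -/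
/-- For idempotents `e, f` in a finite R-trivial monoid, the left ideal `S(ef)^ω`
is the least upper bound of `Se` and `Sf` in the set of left ideals generated by
idempotents, ordered by reverse inclusion. -/
theorem leftIdeal_lub (M : Type*) [Monoid M] [Finite M]
    (hR : ∀ a b : M, {z : M | ∃ s : M, a * s = z} = {z : M | ∃ s : M, b * s = z} → a = b)
    (e f : M) (he : e * e = e) (hf : f * f = f)
    (n : ℕ) (hn : 0 < n) (hef : (e * f) ^ n * (e * f) ^ n = (e * f) ^ n) :
    {z : M | ∃ s : M, s * (e * f) ^ n = z} ⊆ {z : M | ∃ s : M, s * e = z} ∧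
    {z : M | ∃ s : M, s * (e * f) ^ n = z} ⊆ {z : M | ∃ s : M, s * f = z} ∧
    ∀ g : M, g * g = g →
      {z : M | ∃ s : M, s * g = z} ⊆ {z : M | ∃ s : M, s * e = z} →
      {z : M | ∃ s : M, s * g = z} ⊆ {z : M | ∃ s : M, s * f = z} →
      {z : M | ∃ s : M, s * g = z} ⊆ {z : M | ∃ s : M, s * (e * f) ^ n = z} := by
  set z := (e * f) ^ n with hz
  -- z = (e*f)^(n-1) * e * f
  have hsplit : z = (e * f) ^ (n - 1) * e * f := by
    rw [hz, mul_assoc, ← pow_succ, Nat.sub_add_cancel hn]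
  set b := z * ((e * f) ^ (n - 1) * e) with hb
  have hbf : b * f = z := by
    rw [hb, mul_assoc, mul_assoc, ← pow_succ, Nat.sub_add_cancel hn]
    exact hef
  have hzb : z = b := by
    apply hR
    ext t
    constructor
    · rintro ⟨s, rfl⟩
      exact ⟨f * s, by rw [← mul_assoc, hbf]⟩
    · rintro ⟨s, rfl⟩
      exact ⟨(e * f) ^ (n - 1) * e * s, by simp only [hb, mul_assoc]⟩
  refine ⟨?_, ?_, ?_⟩
  · rintro t ⟨s, rfl⟩
    exact ⟨s * (z * (e * f) ^ (n - 1)), by simp only [mul_assoc]; rw [← hb, ← hzb]⟩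
  · rintro t ⟨s, rfl⟩
    exact ⟨s * ((e * f) ^ (n - 1) * e), by rw [hsplit]; simp only [mul_assoc]⟩
  · intro g hg hge hgf
    have hg1 : g ∈ {z : M | ∃ s : M, s * g = z} := ⟨1, one_mul g⟩
    obtain ⟨s₁, hs₁⟩ := hge hg1
    obtain ⟨s₂, hs₂⟩ := hgf hg1
    have hge' : g * e = g := by rw [← hs₁, mul_assoc, he]
    have hgf' : g * f = g := by rw [← hs₂, mul_assoc, hf]
    have hgef : ∀ m : ℕ, g * (e * f) ^ m = g := by
      intro m
      induction m with
      | zero => simp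
      | succ k ih => rw [pow_succ, ← mul_assoc, ih, ← mul_assoc, hge', hgf']
    rintro t ⟨s, rfl⟩
    exact ⟨s * g, by rw [mul_assoc, hgef n]⟩
end

section
/- Let S be a finite R-trivial monoid. The map C : S → L defined by C(x) = S x^ω satisfies C(xy) = C(x) ∨ C(y), where the join in L (left ideals of idempotents ordered by reverse inclusion) is given by Se ∨ Sf = S(ef)^ω. In particular, S(xy)^ω = S(x^ω y^ω)^ω. -/
private lemma absorb_right {M : Type*} [Monoid M]
    (hR : ∀ a b : M, {z : M | ∃ s : M, a * s = z} = {z : M | ∃ s : M, b * s = z} → a = b)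
    (u v : M) (h : ∃ w, u * v * w = u) : u * v = u := by
  obtain ⟨w, hw⟩ := h
  apply hR
  ext z
  constructor
  · rintro ⟨s, rfl⟩
    exact ⟨v * s, by rw [← mul_assoc]⟩
  · rintro ⟨s, rfl⟩
    exact ⟨w * s, by rw [← mul_assoc, hw]⟩

private lemma absorb_pow {M : Type*} [Monoid M] {m z : M} (h : m * z = m) (n : ℕ) :
    m * z ^ n = m := by
  induction n with
  | zero => simp
  | succ k ih => rw [pow_succ, ← mul_assoc, ih, h]

/-- In a finite R-trivial monoid, `C(x) = Sx^ω` is a monoid morphism to the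
semilattice of left ideals of idempotents with join `Se ∨ Sf = S(ef)^ω`:
that is, `S(xy)^ω = S(x^ω y^ω)^ω`. -/
theorem C_is_morphism (M : Type*) [Monoid M] [Finite M]
    (hR : ∀ a b : M, {z : M | ∃ s : M, a * s = z} = {z : M | ∃ s : M, b * s = z} → a = b)
    (x y : M) (a b c d : ℕ) (ha : 0 < a) (hb : 0 < b) (hc : 0 < c) (hd : 0 < d)
    (hxa : x ^ a * x ^ a = x ^ a)
    (hyb : y ^ b * y ^ b = y ^ b)
    (hxyc : (x * y) ^ c * (x * y) ^ c = (x * y) ^ c)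
    (habd : (x ^ a * y ^ b) ^ d * (x ^ a * y ^ b) ^ d = (x ^ a * y ^ b) ^ d) :
    {z : M | ∃ s : M, s * (x * y) ^ c = z} =
      {z : M | ∃ s : M, s * (x ^ a * y ^ b) ^ d = z} := by
  set e := (x * y) ^ c with he
  set f := (x ^ a * y ^ b) ^ d with hf
  obtain ⟨c', rfl⟩ : ∃ c', c = c' + 1 := ⟨c - 1, (Nat.succ_pred_eq_of_pos hc).symm⟩
  obtain ⟨a', rfl⟩ : ∃ a', a = a' + 1 := ⟨a - 1, (Nat.succ_pred_eq_of_pos ha).symm⟩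
  obtain ⟨b', rfl⟩ : ∃ b', b = b' + 1 := ⟨b - 1, (Nat.succ_pred_eq_of_pos hb).symm⟩
  obtain ⟨d', rfl⟩ : ∃ d', d = d' + 1 := ⟨d - 1, (Nat.succ_pred_eq_of_pos hd).symm⟩
  -- e absorbs x and y on the right
  have hex : e * x = e := by
    apply absorb_right hR
    refine ⟨y * (x * y) ^ c', ?_⟩
    rw [mul_assoc, ← mul_assoc x y, ← pow_succ', ← he, hxyc]
  have hexy : e * (x * y) = e := by
    apply absorb_right hR
    refine ⟨(x * y) ^ c', ?_⟩
    rw [mul_assoc, ← pow_succ', ← he, hxyc]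
  have hey : e * y = e := by rw [← hex, mul_assoc, hexy, hex]
  -- hence e * f = e
  have hef : e * f = e := by
    have h1 : e * (x ^ (a' + 1) * y ^ (b' + 1)) = e := by
      rw [← mul_assoc, absorb_pow hex, absorb_pow hey]
    rw [hf]
    exact absorb_pow h1 _
  -- f absorbs x^a * y^b on the right
  have hfab : f * (x ^ (a' + 1) * y ^ (b' + 1)) = f := by
    apply absorb_right hR
    refine ⟨(x ^ (a' + 1) * y ^ (b' + 1)) ^ d', ?_⟩
    rw [mul_assoc, ← pow_succ', ← hf, habd]
  have hfxa : f * x ^ (a' + 1) = f := by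
    apply absorb_right hR
    exact ⟨y ^ (b' + 1), by rw [mul_assoc, hfab]⟩
  have hfx : f * x = f := by
    apply absorb_right hR
    exact ⟨x ^ a', by rw [mul_assoc, ← pow_succ', hfxa]⟩
  have hfyb : f * y ^ (b' + 1) = f := by rw [← hfxa, mul_assoc, hfab, hfxa]
  have hfy : f * y = f := by
    apply absorb_right hR
    exact ⟨y ^ b', by rw [mul_assoc, ← pow_succ', hfyb]⟩
  have hfe : f * e = f := by
    have h1 : f * (x * y) = f := by rw [← mul_assoc, hfx, hfy]
    rw [he]
    exact absorb_pow h1 _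
  -- conclude
  ext z
  constructor
  · rintro ⟨s, rfl⟩
    exact ⟨s * e, by rw [mul_assoc, hef]⟩
  · rintro ⟨s, rfl⟩
    exact ⟨s * f, by rw [mul_assoc, hfe]⟩
end

section
/- Let S be a finite R-trivial monoid and u ∈ S. Any two maximal elements e, f (with respect to the preorder u ≤ v iff ∃ w, uw = v) of the set {s ∈ S : us = u} satisfy {a : ae = a} = {a : af = a}; moreover any such maximal element e is idempotent. -/
/-- In a finite R-trivial monoid, any two maximal elements `e, f` of
`{s : us = u}` (for the preorder `x ≤ y ↔ ∃ w, xw = y`) satisfy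
`{a : ae = a} = {a : af = a}`, and any such maximal element is idempotent. -/
theorem D_well_defined (M : Type*) [Monoid M] [Finite M]
    (hR : ∀ a b : M, {z : M | ∃ s : M, a * s = z} = {z : M | ∃ s : M, b * s = z} → a = b)
    (u e f : M)
    (he : u * e = u) (hemax : ∀ s : M, u * s = u → (∃ w : M, e * w = s) → e = s)
    (hf : u * f = u) (hfmax : ∀ s : M, u * s = u → (∃ w : M, f * w = s) → f = s) :
    {a : M | a * e = a} = {a : M | a * f = a} ∧ e * e = e := by
  have hef : e = e * f := hemax (e * f) (by rw [← mul_assoc, he, hf]) ⟨f, rfl⟩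
  have hfe : f = f * e := hfmax (f * e) (by rw [← mul_assoc, hf, he]) ⟨e, rfl⟩
  constructor
  · ext a
    simp only [Set.mem_setOf_eq]
    constructor
    · intro h; calc a * f = a * e * f := by rw [h]
        _ = a * (e * f) := mul_assoc _ _ _
        _ = a * e := by rw [← hef]
        _ = a := h
    · intro h; calc a * e = a * f * e := by rw [h]
        _ = a * (f * e) := mul_assoc _ _ _
        _ = a * f := by rw [← hfe]
        _ = a := h
  · exact (hemax (e * e) (by rw [← mul_assoc, he, he]) ⟨e, rfl⟩).symm
end

section
/- Let S be a finite R-trivial monoid, u, v ∈ S, and let e be a maximal element of {s ∈ S : us = u} with respect to the preorder ≤. If {a : ae = a} ⊆ {a : av = a}, then uv = u. -/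
/-- In a finite R-trivial monoid, if `e` is a maximal element of `{s : us = u}`
and `{a : ae = a} ⊆ {a : av = a}`, then `uv = u`. -/
theorem descent_condition (M : Type*) [Monoid M] [Finite M]
    (hR : ∀ a b : M, {z : M | ∃ s : M, a * s = z} = {z : M | ∃ s : M, b * s = z} → a = b)
    (u v e : M)
    (he : u * e = u) (hemax : ∀ s : M, u * s = u → (∃ w : M, e * w = s) → e = s)
    (h : {a : M | a * e = a} ⊆ {a : M | a * v = a}) :
    u * v = u := by
  obtain ⟨a, b, hab, hpow⟩ := Finite.exists_ne_map_eq_of_infinite (fun n : ℕ => e ^ n)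
  wlog h' : a < b generalizing a b
  · exact this b a hab.symm hpow.symm (by omega)
  set m := a + 1 with hm
  set k := b - a with hk
  have hk1 : 1 ≤ k := by omega
  have hmk : e ^ m = e ^ (m + k) := by
    have hb : m + k = b + 1 := by omega
    rw [hb, hm, pow_succ, pow_succ]
    rw [hpow]
  have step : ∀ c, m ≤ c → e ^ c = e ^ (c + k) := by
    intro c hc
    have hc' : c = m + (c - m) := by omega
    rw [hc', pow_add, hmk, ← pow_add]
    congr 1
    omega
  have iter : ∀ j c, m ≤ c → e ^ c = e ^ (c + j * k) := by
    intro j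
    induction j with
    | zero => intro c hc; simp
    | succ n ih =>
        intro c hc
        rw [ih c hc, step (c + n * k) (by omega)]
        congr 1
        ring
  set n := m * k with hn
  have hnm : m ≤ n := Nat.le_mul_of_pos_right m hk1
  have idem : e ^ n * e ^ n = e ^ n := by
    rw [← pow_add]
    have := iter m n hnm
    rw [← this]
  have hun : ∀ t : ℕ, u * e ^ t = u := by
    intro t
    induction t with
    | zero => simp
    | succ s ih => rw [pow_succ, ← mul_assoc, ih, he]
  have hle : ∃ w : M, e * w = e ^ n := by
    refine ⟨e ^ (n - 1), ?_⟩
    rw [← pow_succ']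
    congr 1
    omega
  have heeq : e = e ^ n := hemax (e ^ n) (hun n) hle
  have hidem : e * e = e := by rw [heeq]; exact idem
  have hev : e * v = e := h hidem
  calc u * v = u * e * v := by rw [he]
    _ = u * (e * v) := by rw [mul_assoc]
    _ = u * e := by rw [hev]
    _ = u := he
end

section
/- Every weakly ordered monoid is R-trivial; equivalently, in a weakly ordered monoid the relation u ≤ v iff ∃w, uw = v is antisymmetric. -/
/-- Every weakly ordered monoid is R-trivial. -/
theorem weaklyOrdered_is_rtrivial (M : Type*) [Monoid M] [Finite M]
    (L : Type*) [SemilatticeSup L] [Finite L]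
    (C D : M → L)
    (hC : ∀ u v : M, C (u * v) = C u ⊔ C v)
    (hCsurj : Function.Surjective C)
    (h3 : ∀ u v : M, (∃ w : M, u * v * w = u) → C v ≤ D u)
    (h4 : ∀ u v : M, C v ≤ D u → u * v = u) :
    ∀ x y : M, {z : M | ∃ s : M, x * s = z} = {z : M | ∃ s : M, y * s = z} → x = y := by
  intro x y h
  have hy : y ∈ {z : M | ∃ s : M, x * s = z} := by
    rw [h]; exact ⟨1, mul_one y⟩
  have hx : x ∈ {z : M | ∃ s : M, y * s = z} := by
    rw [← h]; exact ⟨1, mul_one x⟩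
  obtain ⟨s, hs⟩ := hy
  obtain ⟨t, ht⟩ := hx
  have : x * s * t = x := by rw [hs, ht]
  have hxs : x * s = x := h4 x s (h3 x s ⟨t, this⟩)
  rw [← hs, hxs]
end

section
/- Every finite R-trivial monoid is a weakly ordered monoid: taking L to be the set of left ideals generated by idempotents ordered by reverse inclusion, C(x) = Sx^ω, and D(u) = C(e) for e a maximal element of {s : us = u}, the four axioms of a weakly ordered monoid hold. -/
/-- Every finite R-trivial monoid is weakly ordered: with `L` the set of left
ideals generated by idempotents ordered by reverse inclusion, `C x = S x^ω`, and
`D u = C (E u)` for `E u` a maximal element of `{s : u * s = u}`, the four axioms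
of a weakly ordered monoid hold (the join in `L` being the least upper bound for
reverse inclusion). -/
theorem rtrivial_is_weaklyOrdered (M : Type*) [Monoid M] [Finite M]
    (hR : ∀ a b : M, {z : M | ∃ s : M, a * s = z} = {z : M | ∃ s : M, b * s = z} → a = b)
    (ω : M → ℕ) (hω : ∀ x : M, 0 < ω x) (hωidem : ∀ x : M, x ^ ω x * x ^ ω x = x ^ ω x)
    (E : M → M) (hE : ∀ u : M, u * E u = u)
    (hEmax : ∀ u s : M, u * s = u → (∃ w : M, E u * w = s) → E u = s) :
    -- `C x := {z | ∃ s, s * x ^ ω x = z}` and `D u := C (E u)`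
    (∀ u v : M,
      -- axiom 1: `C (u * v)` is the join of `C u` and `C v` in `L`
      {z : M | ∃ s : M, s * (u * v) ^ ω (u * v) = z} ⊆ {z : M | ∃ s : M, s * u ^ ω u = z} ∧
      {z : M | ∃ s : M, s * (u * v) ^ ω (u * v) = z} ⊆ {z : M | ∃ s : M, s * v ^ ω v = z} ∧
      ∀ g : M, g * g = g →
        {z : M | ∃ s : M, s * g = z} ⊆ {z : M | ∃ s : M, s * u ^ ω u = z} →
        {z : M | ∃ s : M, s * g = z} ⊆ {z : M | ∃ s : M, s * v ^ ω v = z} →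
        {z : M | ∃ s : M, s * g = z} ⊆ {z : M | ∃ s : M, s * (u * v) ^ ω (u * v) = z}) ∧
    -- axiom 2: `C` is surjective onto `L`
    (∀ g : M, g * g = g →
      ∃ x : M, {z : M | ∃ s : M, s * x ^ ω x = z} = {z : M | ∃ s : M, s * g = z}) ∧
    -- axiom 3: `u * v ≤ u` implies `C v ⪯ D u`
    (∀ u v : M, (∃ w : M, u * v * w = u) →
      {z : M | ∃ s : M, s * (E u) ^ ω (E u) = z} ⊆ {z : M | ∃ s : M, s * v ^ ω v = z}) ∧
    -- axiom 4: `C v ⪯ D u` implies `u * v = u`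
    (∀ u v : M,
      {z : M | ∃ s : M, s * (E u) ^ ω (E u) = z} ⊆ {z : M | ∃ s : M, s * v ^ ω v = z} →
      u * v = u) := by
  -- R-triviality in usable form: if `a * b * w = a` for some `w`, then `a * b = a`.
  have Rstab : ∀ a b : M, (∃ w : M, a * b * w = a) → a * b = a := by
    rintro a b ⟨w, hw⟩
    refine (hR a (a * b) ?_).symm
    ext z
    simp only [Set.mem_setOf_eq]
    constructor
    · rintro ⟨s, rfl⟩
      exact ⟨w * s, by rw [← mul_assoc, hw]⟩
    · rintro ⟨s, rfl⟩
      exact ⟨b * s, (mul_assoc a b s).symm⟩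
  have stabpow : ∀ a q : M, a * q = a → ∀ n : ℕ, a * q ^ n = a := by
    intro a q h n
    induction n with
    | zero => simp
    | succ n ih => rw [pow_succ, ← mul_assoc, ih, h]
  have stabω : ∀ a q : M, a * q ^ ω q = a → a * q = a := by
    intro a q h
    refine Rstab a q ⟨q ^ (ω q - 1), ?_⟩
    rw [mul_assoc, ← pow_succ', Nat.sub_add_cancel (hω q), h]
  have idemωpow : ∀ g : M, g * g = g → g ^ ω g = g := by
    intro g hg
    conv_lhs => rw [← Nat.sub_add_cancel (hω g)]
    rw [pow_succ', stabpow g g hg]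
  have hEidem : ∀ u : M, E u * E u = E u := fun u =>
    (hEmax u (E u * E u) (by rw [← mul_assoc, hE, hE]) ⟨E u, rfl⟩).symm
  have subC : ∀ p q : M, p * q = p →
      {z : M | ∃ s : M, s * p = z} ⊆ {z : M | ∃ s : M, s * q = z} := by
    rintro p q h z ⟨s, rfl⟩
    exact ⟨s * p, by rw [mul_assoc, h]⟩
  refine ⟨?_, ?_, ?_, ?_⟩
  · -- axiom 1
    intro u v
    set e := (u * v) ^ ω (u * v) with hedef
    have he : e * e = e := hωidem (u * v)
    have heuv : e * (u * v) = e := by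
      refine Rstab e (u * v) ⟨(u * v) ^ (ω (u * v) - 1), ?_⟩
      rw [mul_assoc, ← pow_succ', Nat.sub_add_cancel (hω _), ← hedef, he]
    have heu : e * u = e := by
      refine Rstab e u ⟨v * (u * v) ^ (ω (u * v) - 1), ?_⟩
      rw [mul_assoc, ← mul_assoc u v, ← mul_assoc e (u * v), heuv]
      exact stabpow e (u * v) heuv _
    have hev : e * v = e := by
      have h1 : e * u * v = e * (u * v) := mul_assoc _ _ _
      rw [heu, heuv] at h1
      exact h1
    refine ⟨subC e (u ^ ω u) (stabpow e u heu (ω u)),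
      subC e (v ^ ω v) (stabpow e v hev (ω v)), ?_⟩
    intro g hg h1 h2
    obtain ⟨s, hs⟩ := h1 ⟨1, one_mul g⟩
    have hgu' : g * u ^ ω u = g := by rw [← hs, mul_assoc, hωidem]
    have hgu : g * u = g := stabω g u hgu'
    obtain ⟨t, ht⟩ := h2 ⟨1, one_mul g⟩
    have hgv' : g * v ^ ω v = g := by rw [← ht, mul_assoc, hωidem]
    have hgv : g * v = g := stabω g v hgv'
    have hguv : g * (u * v) = g := by rw [← mul_assoc, hgu, hgv]
    have hge : g * e = g := by rw [hedef]; exact stabpow g (u * v) hguv (ω (u * v))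
    exact subC g e hge
  · -- axiom 2
    intro g hg
    exact ⟨g, by rw [idemωpow g hg]⟩
  · -- axiom 3
    rintro u v ⟨w, hw⟩
    have huv : u * v = u := Rstab u v ⟨w, hw⟩
    have huvn : u * v ^ ω v = u := stabpow u v huv (ω v)
    have hEv : E u * v ^ ω v = E u :=
      (hEmax u (E u * v ^ ω v) (by rw [← mul_assoc, hE, huvn]) ⟨v ^ ω v, rfl⟩).symm
    rw [idemωpow (E u) (hEidem u)]
    exact subC (E u) (v ^ ω v) hEv
  · -- axiom 4
    intro u v hsub
    rw [idemωpow (E u) (hEidem u)] at hsub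
    obtain ⟨s, hs⟩ := hsub ⟨1, one_mul (E u)⟩
    have h1 : E u * v ^ ω v = E u := by rw [← hs, mul_assoc, hωidem]
    have h2 : u * v ^ ω v = u := by
      calc u * v ^ ω v = u * E u * v ^ ω v := by rw [hE]
        _ = u * (E u * v ^ ω v) := mul_assoc _ _ _
        _ = u * E u := by rw [h1]
        _ = u := hE u
    exact stabω u v h2
end
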